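/- arXiv:2512.22330 — 6 statements merged into one kernel-verified Lean document; each statement's English description precedes it below -/
import Mathlib

section
/- For integers n ≥ 2 and 1 ≤ j ≤ n/2, π(j,n) ≥ exp(-j²/n - 2j³/n²). -/
lemma exp_le_one_sub (x : ℝ) (hx : 0 ≤ x) (hx2 : x ≤ 1/2) :
    Real.exp (-x - 2*x^2) ≤ 1 - x := by
  have h1 : (0:ℝ) < 1 - x := by linarith
  have h2 : x + 2*x^2 + 1 ≤ Real.exp (x + 2*x^2) := Real.add_one_le_exp _
  have h3 : Real.exp (-x - 2*x^2) * Real.exp (x + 2*x^2) = 1 := by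
    rw [← Real.exp_add]; norm_num
  have h4 : 0 < Real.exp (-x - 2*x^2) := Real.exp_pos _
  nlinarith [Real.exp_pos (x + 2*x^2)]

theorem stmt_6 (n j : ℕ) (hn : 2 ≤ n) (hj1 : 1 ≤ j) (hjn : 2 * j ≤ n) :
    ∏ ℓ ∈ Finset.Icc 1 j, ((n : ℝ) + ℓ - j) / ((n : ℝ) + ℓ) ≥
      Real.exp (-(j : ℝ) ^ 2 / n - 2 * (j : ℝ) ^ 3 / (n : ℝ) ^ 2) := by
  have hn0 : (0:ℝ) < n := by positivity
  have hjn' : (2:ℝ) * j ≤ n := by exact_mod_cast hjn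
  have hj0 : (0:ℝ) < j := by exact_mod_cast hj1
  -- pointwise bound
  have key : ∀ ℓ ∈ Finset.Icc 1 j,
      Real.exp (-(j / ((n:ℝ) + ℓ)) - 2 * (j / ((n:ℝ) + ℓ))^2) ≤
        ((n : ℝ) + ℓ - j) / ((n : ℝ) + ℓ) := by
    intro ℓ hℓ
    have hℓ1 : 1 ≤ ℓ := (Finset.mem_Icc.mp hℓ).1
    have hd : (0:ℝ) < (n:ℝ) + ℓ := by positivity
    have hx0 : 0 ≤ (j:ℝ) / ((n:ℝ) + ℓ) := by positivity
    have hx2 : (j:ℝ) / ((n:ℝ) + ℓ) ≤ 1/2 := by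
      rw [div_le_iff₀ hd]
      have : (1:ℝ) ≤ ℓ := by exact_mod_cast hℓ1
      nlinarith
    have := exp_le_one_sub _ hx0 hx2
    have heq : ((n : ℝ) + ℓ - j) / ((n : ℝ) + ℓ) = 1 - (j:ℝ) / ((n:ℝ) + ℓ) := by
      field_simp
    rw [heq]
    exact this
  -- product of exponentials
  calc Real.exp (-(j : ℝ) ^ 2 / n - 2 * (j : ℝ) ^ 3 / (n : ℝ) ^ 2)
      ≤ Real.exp (∑ ℓ ∈ Finset.Icc 1 j,
          (-(j / ((n:ℝ) + ℓ)) - 2 * (j / ((n:ℝ) + ℓ))^2)) := by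
        apply Real.exp_le_exp.mpr
        have hsum : ∀ ℓ ∈ Finset.Icc 1 j,
            -((j:ℝ)/n) - 2 * ((j:ℝ)/n)^2 ≤
              -(j / ((n:ℝ) + ℓ)) - 2 * (j / ((n:ℝ) + ℓ))^2 := by
          intro ℓ hℓ
          have hℓ1 : (1:ℝ) ≤ ℓ := by exact_mod_cast (Finset.mem_Icc.mp hℓ).1
          have hd : (0:ℝ) < (n:ℝ) + ℓ := by positivity
          have hle : (j:ℝ) / ((n:ℝ) + ℓ) ≤ (j:ℝ)/n := by
            apply div_le_div_of_nonneg_left (le_of_lt hj0) hn0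
            linarith
          have hx0 : 0 ≤ (j:ℝ) / ((n:ℝ) + ℓ) := by positivity
          nlinarith
        have := Finset.card_nsmul_le_sum (Finset.Icc 1 j)
          (fun ℓ => -(j / ((n:ℝ) + ℓ)) - 2 * (j / ((n:ℝ) + ℓ))^2)
          (-((j:ℝ)/n) - 2 * ((j:ℝ)/n)^2) hsum
        have hcard : (Finset.Icc 1 j).card = j := by simp
        rw [hcard, nsmul_eq_mul] at this
        calc -(j : ℝ) ^ 2 / n - 2 * (j : ℝ) ^ 3 / (n : ℝ) ^ 2
            = (j:ℝ) * (-((j:ℝ)/n) - 2 * ((j:ℝ)/n)^2) := by field_simp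
          _ ≤ _ := this
    _ = ∏ ℓ ∈ Finset.Icc 1 j,
          Real.exp (-(j / ((n:ℝ) + ℓ)) - 2 * (j / ((n:ℝ) + ℓ))^2) :=
        Real.exp_sum _ _
    _ ≤ ∏ ℓ ∈ Finset.Icc 1 j, ((n : ℝ) + ℓ - j) / ((n : ℝ) + ℓ) := by
        apply Finset.prod_le_prod
        · intro ℓ _; positivity
        · exact key
end

section
/- For integers n ≥ 1 and real j ≥ 1 (j an integer), C(2n, n+j)/4^n ≤ C(2n,n)/4^n · exp(-j²/(n+j)). -/
lemma key_7 (n : ℕ) (hn : 1 ≤ n) : ∀ j, j ≤ n →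
    ((2 * n).choose (n + j) : ℝ) ≤
      ((2 * n).choose n : ℝ) * Real.exp (-(j : ℝ) ^ 2 / ((n : ℝ) + j)) := by
  intro j
  induction j with
  | zero => simp
  | succ j ih =>
    intro hj
    have hjn : j ≤ n := le_of_lt (Nat.lt_of_succ_le hj)
    have hjn' : j < n := Nat.lt_of_succ_le hj
    have ihr := ih hjn
    -- choose identity: (2n).choose (n+j+1) * (n+j+1) = (2n).choose (n+j) * (n - j)
    have hid : (2 * n).choose (n + j + 1) * (n + j + 1) = (2 * n).choose (n + j) * (n - j) := by
      have := Nat.choose_succ_right_eq (2 * n) (n + j)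
      rw [this]
      congr 1
      omega
    have hidR : ((2 * n).choose (n + j + 1) : ℝ) * ((n : ℝ) + j + 1)
        = ((2 * n).choose (n + j) : ℝ) * ((n : ℝ) - j) := by
      have := congrArg (Nat.cast : ℕ → ℝ) hid
      push_cast [Nat.cast_sub hjn] at this
      linarith [this]
    have hden : (0 : ℝ) < (n : ℝ) + j + 1 := by positivity
    have hchoose_eq : ((2 * n).choose (n + j + 1) : ℝ)
        = ((2 * n).choose (n + j) : ℝ) * (((n : ℝ) - j) / ((n : ℝ) + j + 1)) := by
      field_simp
      linarith [hidR]
    rw [show n + (j + 1) = n + j + 1 from rfl, hchoose_eq]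
    -- factor bound: (n - j)/(n + j + 1) ≤ exp(-(2j+1)/(n+j+1))
    have hfac : ((n : ℝ) - j) / ((n : ℝ) + j + 1)
        ≤ Real.exp (-(2 * (j : ℝ) + 1) / ((n : ℝ) + j + 1)) := by
      have h1 : ((n : ℝ) - j) / ((n : ℝ) + j + 1)
          = 1 + (-(2 * (j : ℝ) + 1) / ((n : ℝ) + j + 1)) := by
        field_simp
        ring
      rw [h1]
      have := Real.add_one_le_exp (-(2 * (j : ℝ) + 1) / ((n : ℝ) + j + 1))
      linarith [this]
    have hfac0 : (0 : ℝ) ≤ ((n : ℝ) - j) / ((n : ℝ) + j + 1) := by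
      apply div_nonneg _ (le_of_lt hden)
      have : (j : ℝ) ≤ (n : ℝ) := by exact_mod_cast hjn
      linarith
    have hC0 : (0 : ℝ) ≤ ((2 * n).choose n : ℝ) := by positivity
    calc ((2 * n).choose (n + j) : ℝ) * (((n : ℝ) - j) / ((n : ℝ) + j + 1))
        ≤ (((2 * n).choose n : ℝ) * Real.exp (-(j : ℝ) ^ 2 / ((n : ℝ) + j)))
            * Real.exp (-(2 * (j : ℝ) + 1) / ((n : ℝ) + j + 1)) := by
          apply mul_le_mul ihr hfac hfac0
          positivity
      _ = ((2 * n).choose n : ℝ) *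
            Real.exp (-(j : ℝ) ^ 2 / ((n : ℝ) + j) + -(2 * (j : ℝ) + 1) / ((n : ℝ) + j + 1)) := by
          rw [mul_assoc, ← Real.exp_add]
      _ ≤ ((2 * n).choose n : ℝ) *
            Real.exp (-((j : ℝ) + 1) ^ 2 / ((n : ℝ) + ((j : ℕ) + 1 : ℕ))) := by
          apply mul_le_mul_of_nonneg_left _ hC0
          rw [Real.exp_le_exp]
          push_cast
          have hd1 : (0 : ℝ) < (n : ℝ) + j := by positivity
          have hmono : (j : ℝ) ^ 2 / ((n : ℝ) + j + 1) ≤ (j : ℝ) ^ 2 / ((n : ℝ) + j) := by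
            apply div_le_div_of_nonneg_left (by positivity) hd1
            linarith
          have hexpand : ((j : ℝ) + 1) ^ 2 / ((n : ℝ) + j + 1)
              = (j : ℝ) ^ 2 / ((n : ℝ) + j + 1) + (2 * (j : ℝ) + 1) / ((n : ℝ) + j + 1) := by
            field_simp
            ring
          have h2 : ((j : ℝ) + 1) ^ 2 / ((n : ℝ) + j + 1)
              ≤ (j : ℝ) ^ 2 / ((n : ℝ) + j) + (2 * (j : ℝ) + 1) / ((n : ℝ) + j + 1) := by
            rw [hexpand]; linarith
          have : -(j : ℝ) ^ 2 / ((n : ℝ) + j) + -(2 * (j : ℝ) + 1) / ((n : ℝ) + j + 1)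
              = -((j : ℝ) ^ 2 / ((n : ℝ) + j) + (2 * (j : ℝ) + 1) / ((n : ℝ) + j + 1)) := by
            ring
          rw [this, show (n:ℝ)+((j:ℝ)+1) = (n:ℝ)+(j:ℝ)+1 by ring, neg_div]
          linarith [h2]
      _ = ((2 * n).choose n : ℝ) * Real.exp (-((j : ℕ) + 1 : ℕ) ^ 2 / ((n : ℝ) + ((j : ℕ) + 1 : ℕ))) := by
          push_cast; ring_nf

theorem stmt_7 (n j : ℕ) (hn : 1 ≤ n) (hj1 : 1 ≤ j) (hjn : j ≤ n) :
    ((2 * n).choose (n + j) : ℝ) / 4 ^ n ≤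
      ((2 * n).choose n : ℝ) / 4 ^ n * Real.exp (-(j : ℝ) ^ 2 / ((n : ℝ) + j)) := by
  have h := key_7 n hn j hjn
  rw [div_mul_eq_mul_div]
  apply div_le_div_of_nonneg_right ?_ (by positivity)
  exact h
end

section
/- For all integers n ≥ 1, 1 ≤ √((n+1/2)·π) · C(2n,n)/4^n ≤ √(1 + 1/(2n)). -/
open Real Real.Wallis Nat

lemma key_identity (n : ℕ) :
    ((2 * n : ℝ) + 1) * (((2 * n).choose n : ℝ) / 4 ^ n) ^ 2 * W n = 1 := by
  have hc : ((2 * n).choose n : ℝ) = ((2 * n)! : ℝ) / ((n ! : ℝ) * (n ! : ℝ)) := by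
    rw [Nat.cast_choose ℝ (by omega : n ≤ 2 * n), show 2*n - n = n from by omega]
  rw [hc, W_eq_factorial_ratio]
  have h4 : ((4 : ℝ) ^ n) ^ 2 = 2 ^ (4 * n) := by
    rw [← pow_mul, show (4:ℝ) = 2^2 by norm_num, ← pow_mul]
    ring_nf
  have h1 : (0:ℝ) < ((2*n)! : ℝ) := by positivity
  have h2 : (0:ℝ) < (n ! : ℝ) := by positivity
  have h3 : (0:ℝ) < 2 ^ (4*n) := by positivity
  have h5 : (0:ℝ) < 2 * (n:ℝ) + 1 := by positivity
  field_simp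
  rw [← h4]

theorem stmt_12 (n : ℕ) (hn : 1 ≤ n) :
    1 ≤ Real.sqrt (((n : ℝ) + 1 / 2) * Real.pi) * (((2 * n).choose n : ℝ) / 4 ^ n) ∧
    Real.sqrt (((n : ℝ) + 1 / 2) * Real.pi) * (((2 * n).choose n : ℝ) / 4 ^ n) ≤
      Real.sqrt (1 + 1 / (2 * n : ℝ)) := by
  set c : ℝ := ((2 * n).choose n : ℝ) / 4 ^ n with hc
  have hcpos : 0 < c := by
    rw [hc]
    apply _root_.div_pos
    · exact_mod_cast Nat.choose_pos (by omega : n ≤ 2 * n)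
    · positivity
  have hW := W_pos n
  have hA : ((n : ℝ) + 1 / 2) * Real.pi * c ^ 2 = (Real.pi / 2) / W n := by
    rw [eq_div_iff hW.ne', hc]
    linear_combination (Real.pi / 2) * key_identity n
  have hsqrt : Real.sqrt (((n : ℝ) + 1 / 2) * Real.pi) * c
      = Real.sqrt (((n : ℝ) + 1 / 2) * Real.pi * c ^ 2) := by
    rw [Real.sqrt_mul (by positivity : (0:ℝ) ≤ ((n:ℝ) + 1 / 2) * Real.pi) (c ^ 2),
      Real.sqrt_sq hcpos.le]
  constructor
  · rw [hsqrt, Real.one_le_sqrt, hA, le_div_iff₀ hW, one_mul]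
    exact W_le n
  · rw [hsqrt]
    apply Real.sqrt_le_sqrt
    rw [hA]
    have hle := le_W n
    have hn1 : (1:ℝ) ≤ (n:ℝ) := by exact_mod_cast hn
    rw [div_le_iff₀ hW]
    have h1 : Real.pi / 2
        ≤ (1 + 1 / (2 * (n:ℝ))) * ((2*(n:ℝ)+1)/(2*(n:ℝ)+2) * (Real.pi/2)) := by
      have hexp : (1 + 1 / (2 * (n:ℝ))) * ((2*(n:ℝ)+1)/(2*(n:ℝ)+2))
          = (2*(n:ℝ)+1)^2 / (2*(n:ℝ)*(2*(n:ℝ)+2)) := by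
        field_simp
      rw [mul_comm ((2*(n:ℝ)+1)/(2*(n:ℝ)+2)) (Real.pi/2), ← mul_assoc,
        mul_comm (1 + 1 / (2 * (n:ℝ))) (Real.pi/2), mul_assoc, hexp]
      have h2 : (1:ℝ) ≤ (2*(n:ℝ)+1)^2 / (2*(n:ℝ)*(2*(n:ℝ)+2)) := by
        rw [le_div_iff₀ (by positivity), one_mul]
        nlinarith
      nlinarith [Real.pi_pos]
    calc Real.pi / 2 ≤ (1 + 1 / (2 * (n:ℝ))) * ((2*(n:ℝ)+1)/(2*(n:ℝ)+2) * (Real.pi/2)) := h1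
      _ ≤ (1 + 1 / (2 * (n:ℝ))) * W n := by
          apply mul_le_mul_of_nonneg_left hle
          positivity
end

section
/- For all integers n ≥ 1, 1/√(1+1/(2n)) ≤ √(nπ) · C(2n,n)/4^n ≤ 1. -/
open Real
open scoped Nat

theorem stmt_13 (n : ℕ) (hn : 1 ≤ n) :
    1 / Real.sqrt (1 + 1 / (2 * n : ℝ)) ≤
      Real.sqrt ((n : ℝ) * Real.pi) * (((2 * n).choose n : ℝ) / 4 ^ n) ∧
    Real.sqrt ((n : ℝ) * Real.pi) * (((2 * n).choose n : ℝ) / 4 ^ n) ≤ 1 := by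
  set N : ℝ := (n : ℝ) with hN
  have hN1 : (1 : ℝ) ≤ N := by rw [hN]; exact_mod_cast hn
  have hNpos : 0 < N := by linarith
  set c : ℝ := (((2 * n).choose n : ℝ) / 4 ^ n) with hc
  have hcpos : 0 < c := by
    apply div_pos _ (by positivity)
    exact_mod_cast Nat.choose_pos (by omega : n ≤ 2 * n)
  set W : ℝ := Real.Wallis.W n with hWdef
  have hWpos : 0 < W := Real.Wallis.W_pos n
  have hW1 : W ≤ π / 2 := Real.Wallis.W_le n
  have hW2 : (2 * N + 1) / (2 * N + 2) * (π / 2) ≤ W := Real.Wallis.le_W n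
  -- key identity : c^2 * ((2*N+1) * W) = 1
  have hfactN : (2 * n).choose n * n ! * n ! = (2 * n)! := by
    have := Nat.choose_mul_factorial_mul_factorial (by omega : n ≤ 2 * n)
    rwa [show 2 * n - n = n by omega] at this
  have hfact : ((2 * n).choose n : ℝ) * (n ! : ℝ) * (n ! : ℝ) = ((2 * n)! : ℝ) := by
    exact_mod_cast congrArg (Nat.cast : ℕ → ℝ) hfactN
  have hkey : c ^ 2 * ((2 * N + 1) * W) = 1 := by
    rw [hWdef, Real.Wallis.W_eq_factorial_ratio, hc, hN]
    have h1 : ((2 * n)! : ℝ) ≠ 0 := by positivity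
    have h2 : ((n)! : ℝ) ≠ 0 := by positivity
    have h4 : (2 : ℝ) ^ (4 * n) = (4 : ℝ) ^ n * (4 : ℝ) ^ n := by
      rw [show 4 * n = 2 * n + 2 * n by ring, pow_add]
      norm_num [pow_mul]
    field_simp
    rw [h4, ← hfact]
    ring
  have hπ := Real.pi_pos
  -- the two squared inequalities
  have hsq_upper : N * π * c ^ 2 ≤ 1 := by
    have hW2' : (2 * N + 1) * π ≤ W * (2 * (2 * N + 2)) := by
      rw [div_mul_eq_mul_div, div_le_iff₀ (by linarith)] at hW2
      nlinarith
    nlinarith [sq_nonneg c, mul_pos hWpos hNpos, sq_nonneg (c * (2*N+1)),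
      mul_nonneg (sq_nonneg c) hπ.le]
  have hsq_lower : 2 * N / (2 * N + 1) ≤ N * π * c ^ 2 := by
    rw [div_le_iff₀ (by linarith)]
    nlinarith [sq_nonneg c, mul_nonneg (mul_nonneg (sq_nonneg c) hNpos.le) (by linarith : (0:ℝ) ≤ π - 2 * W)]
  -- convert to sqrt form
  have hmid : Real.sqrt (N * π) * c = Real.sqrt (N * π * c ^ 2) := by
    rw [Real.sqrt_mul (by positivity : (0:ℝ) ≤ N * π) (c ^ 2), Real.sqrt_sq hcpos.le]
  constructor
  · have hlhs : 1 / Real.sqrt (1 + 1 / (2 * N)) = Real.sqrt (2 * N / (2 * N + 1)) := by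
      rw [one_div, ← Real.sqrt_inv]
      congr 1
      field_simp
    rw [hlhs, hmid]
    exact Real.sqrt_le_sqrt hsq_lower
  · rw [hmid]
    calc Real.sqrt (N * π * c ^ 2) ≤ Real.sqrt 1 := Real.sqrt_le_sqrt hsq_upper
      _ = 1 := Real.sqrt_one
end

section
/- For all integers n ≥ 1, (1+1/(2n))^{-3/2} ≤ √(nπ) · C(2n+1,n)/2^{2n+1} ≤ 1. -/
open Real

lemma nat_key (n : ℕ) : ((2*n+1).choose n)^2 * (n.factorial)^4 * (n+1)^2
    = (2*n+1)^2 * ((2*n).factorial)^2 := by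
  have h := Nat.choose_mul_factorial_mul_factorial (show n ≤ 2*n+1 by omega)
  have h2 : 2*n+1 - n = n+1 := by omega
  rw [h2, Nat.factorial_succ n, Nat.factorial_succ (2*n)] at h
  have hsq := congrArg (·^2) h
  ring_nf at hsq ⊢
  linarith [hsq]

lemma key_sq (n : ℕ) :
    (((2*n+1).choose n : ℝ) / 2 ^ (2*n+1))^2 * Real.Wallis.W n
      = (2*(n:ℝ)+1) / (4 * ((n:ℝ)+1)^2) := by
  rw [Real.Wallis.W_eq_factorial_ratio]
  have h' : (((2*n+1).choose n : ℝ))^2 * ((n.factorial : ℝ))^4 * ((n:ℝ)+1)^2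
      = ((2*(n:ℝ)+1))^2 * (((2*n).factorial : ℝ))^2 := by exact_mod_cast nat_key n
  have hfn : ((n.factorial : ℝ)) ≠ 0 := by positivity
  have hf2n : (((2*n).factorial : ℝ)) ≠ 0 := by positivity
  have h1 : (2*(n:ℝ)+1) ≠ 0 := by positivity
  have h2 : ((n:ℝ)+1) ≠ 0 := by positivity
  have hp : ((2:ℝ)) ^ (2*n+1) ≠ 0 := by positivity
  field_simp
  have hpp : ((2:ℝ)^(2*n+1))^2 = 4 * 2^(4*n) := by
    rw [← pow_mul, show (2*n+1)*2 = 4*n+2 by ring, pow_add]; ring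
  rw [hpp]
  linear_combination (4 * (2:ℝ)^(4*n)) * h'

theorem stmt_15 (n : ℕ) (hn : 1 ≤ n) :
    (1 + 1 / (2 * n : ℝ)) ^ (-(3 : ℝ) / 2) ≤
      Real.sqrt ((n : ℝ) * Real.pi) * (((2 * n + 1).choose n : ℝ) / 2 ^ (2 * n + 1)) ∧
    Real.sqrt ((n : ℝ) * Real.pi) * (((2 * n + 1).choose n : ℝ) / 2 ^ (2 * n + 1)) ≤ 1 := by
  have hn1 : (1:ℝ) ≤ (n:ℝ) := by exact_mod_cast hn
  have hπ := Real.pi_pos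
  have hW := Real.Wallis.W_pos n
  have hWle := Real.Wallis.W_le n
  have hleW := Real.Wallis.le_W n
  set c : ℝ := ((2 * n + 1).choose n : ℝ) / 2 ^ (2 * n + 1) with hc
  set A : ℝ := Real.sqrt ((n : ℝ) * Real.pi) * c with hA
  have hkey := key_sq n
  have hc0 : 0 ≤ c := by positivity
  have hA0 : 0 ≤ A := by positivity
  have hAsqW : A^2 * Real.Wallis.W n = (n:ℝ) * Real.pi * ((2*(n:ℝ)+1) / (4*((n:ℝ)+1)^2)) := by
    rw [hA, mul_pow, Real.sq_sqrt (by positivity), mul_assoc, hkey]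
  -- upper bound on A^2
  have hup : A^2 ≤ (n:ℝ)/((n:ℝ)+1) := by
    have h1 : A^2 * Real.Wallis.W n ≤ ((n:ℝ)/((n:ℝ)+1)) * Real.Wallis.W n := by
      rw [hAsqW]
      have h2 : ((n:ℝ)/((n:ℝ)+1)) * ((2*(n:ℝ)+1)/(2*(n:ℝ)+2) * (Real.pi/2))
          = (n:ℝ) * Real.pi * ((2*(n:ℝ)+1) / (4*((n:ℝ)+1)^2)) := by
        field_simp; ring
      calc (n:ℝ) * Real.pi * ((2*(n:ℝ)+1) / (4*((n:ℝ)+1)^2))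
          = ((n:ℝ)/((n:ℝ)+1)) * ((2*(n:ℝ)+1)/(2*(n:ℝ)+2) * (Real.pi/2)) := h2.symm
        _ ≤ ((n:ℝ)/((n:ℝ)+1)) * Real.Wallis.W n := by
            apply mul_le_mul_of_nonneg_left hleW (by positivity)
    exact le_of_mul_le_mul_right h1 hW
  -- lower bound on A^2
  have hlo : (n:ℝ)*(2*(n:ℝ)+1)/(2*((n:ℝ)+1)^2) ≤ A^2 := by
    have h1 : A^2 * Real.Wallis.W n ≤ A^2 * (Real.pi/2) :=
      mul_le_mul_of_nonneg_left hWle (by positivity)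
    rw [hAsqW] at h1
    have h2 : (n:ℝ)*(2*(n:ℝ)+1)/(2*((n:ℝ)+1)^2) * (Real.pi/2)
        = (n:ℝ) * Real.pi * ((2*(n:ℝ)+1) / (4*((n:ℝ)+1)^2)) := by
      field_simp; ring
    refine le_of_mul_le_mul_right ?_ (show (0:ℝ) < Real.pi/2 by positivity)
    rw [h2]; exact h1
  constructor
  · -- lower bound
    set x : ℝ := 1 + 1 / (2 * (n:ℝ)) with hx
    have hx0 : 0 < x := by positivity
    have hrw : x ^ (-(3:ℝ)/2) = Real.sqrt (x ^ (-3:ℤ)) := by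
      rw [Real.sqrt_eq_rpow, ← Real.rpow_intCast x (-3), ← Real.rpow_mul hx0.le]
      norm_num
    have hxinv : x ^ (-3:ℤ) = (2*(n:ℝ)/(2*(n:ℝ)+1))^3 := by
      rw [show (-3:ℤ) = -(3:ℕ) by rfl, zpow_neg, zpow_natCast, ← inv_pow]
      congr 1
      rw [hx]
      field_simp
    have hcube : (2*(n:ℝ)/(2*(n:ℝ)+1))^3 ≤ A^2 := by
      refine le_trans ?_ hlo
      rw [div_pow, div_le_div_iff₀ (by positivity) (by positivity)]
      nlinarith [hn1, sq_nonneg ((n:ℝ))]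
    calc x ^ (-(3:ℝ)/2) = Real.sqrt (x ^ (-3:ℤ)) := hrw
      _ ≤ Real.sqrt (A^2) := Real.sqrt_le_sqrt (by rw [hxinv]; exact hcube)
      _ = A := Real.sqrt_sq hA0
  · have hup1 : A^2 ≤ 1 := hup.trans (by rw [div_le_one (by positivity)]; linarith)
    nlinarith [hup1, hA0, sq_nonneg (A - 1)]
end

section
/- Let x > 0 and let n ≥ max(x², 1) be an integer. Let S_{2n} be a Binomial(2n, 1/2) random variable. Then P(|S_{2n} - n| < x√(n/2)) ≤ ∫_{-x}^{x} e^{-s²/2} ds/√(2π) + e^{(x³+2)/(2√(2n))} - 1. -/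
open Real

lemma central_le (n : ℕ) (hn : 1 ≤ n) :
    ((2 * n).choose n : ℝ) / 4 ^ n ≤ 1 / Real.sqrt (π * n) := by
  have hW := Real.Wallis.le_W n
  have hWf := Real.Wallis.W_eq_factorial_ratio n
  have hWpos := Real.Wallis.W_pos n
  have hfactN := Nat.choose_mul_factorial_mul_factorial (by omega : n ≤ 2*n)
  rw [show 2*n-n = n by omega] at hfactN
  have hfact : ((2*n).choose n : ℝ) * (Nat.factorial n : ℝ) * (Nat.factorial n : ℝ)
      = ((Nat.factorial (2*n) : ℕ) : ℝ) := by exact_mod_cast congrArg (Nat.cast : ℕ → ℝ) hfactN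
  have hnR : (1:ℝ) ≤ n := by exact_mod_cast hn
  have h4 : (0:ℝ) < 4 ^ n := by positivity
  have hfp : (0:ℝ) < (Nat.factorial n : ℝ) := by exact_mod_cast Nat.factorial_pos n
  set a : ℝ := ((2 * n).choose n : ℝ) / 4 ^ n with ha
  have hane : 0 ≤ a := by positivity
  have hsq : a ^ 2 * (Real.Wallis.W n * (2 * (n:ℝ) + 1)) = 1 := by
    rw [ha, hWf]
    have h16 : (2:ℝ) ^ (4 * n) = (4:ℝ)^n * 4^n := by
      rw [← pow_add, show (4:ℝ) = 2^2 by norm_num, ← pow_mul]; ring_nf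
    have h2n1 : (0:ℝ) < 2 * (n:ℝ) + 1 := by positivity
    have hf2 : (0:ℝ) < ((Nat.factorial (2*n) : ℕ) : ℝ) := by exact_mod_cast Nat.factorial_pos (2*n)
    field_simp [h16]
    rw [h16, ← hfact]; ring
  have h2n2 : (0:ℝ) < 2*(n:ℝ)+2 := by positivity
  have h2n1 : (0:ℝ) < 2 * (n:ℝ) + 1 := by positivity
  have ha2 : 0 ≤ a^2 := sq_nonneg a
  have key : a ^ 2 * (π * n) ≤ 1 := by
    have step1 : a^2 * ((2*(n:ℝ)+1)/(2*(n:ℝ)+2)*(π/2) * (2*(n:ℝ)+1)) ≤ 1 := by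
      calc a^2 * ((2*(n:ℝ)+1)/(2*(n:ℝ)+2)*(π/2) * (2*(n:ℝ)+1))
          ≤ a^2 * (Real.Wallis.W n * (2*(n:ℝ)+1)) :=
            mul_le_mul_of_nonneg_left (mul_le_mul_of_nonneg_right hW h2n1.le) ha2
        _ = 1 := hsq
    refine le_trans (mul_le_mul_of_nonneg_left ?_ ha2) step1
    rw [div_mul_eq_mul_div, div_mul_eq_mul_div, le_div_iff₀ h2n2]
    nlinarith [pi_pos]
  have hπn : (0:ℝ) < π * n := by positivity
  have final : a ≤ Real.sqrt (1/(π*(n:ℝ))) := by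
    rw [← Real.sqrt_sq hane]
    apply Real.sqrt_le_sqrt
    rw [le_div_iff₀ hπn]
    simpa using key
  rwa [one_div, Real.sqrt_inv, ← one_div] at final

lemma choose_shift_le (n : ℕ) (hn : 1 ≤ n) :
    ∀ j : ℕ, j ≤ n →
    ((2*n).choose (n+j) : ℝ) ≤ ((2*n).choose n : ℝ)
      * Real.exp (-(j:ℝ)^2/(n:ℝ) + (j:ℝ)^3/(n:ℝ)^2) := by
  have hnR : (0:ℝ) < n := by exact_mod_cast hn
  intro j
  induction j with
  | zero => intro _; simp
  | succ j ih =>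
    intro hj1
    have hj : j ≤ n := by omega
    have hrec := Nat.choose_succ_right_eq (2*n) (n+j)
    rw [show 2*n - (n+j) = n - j by omega] at hrec
    have hrecR : ((2*n).choose (n+j+1) : ℝ) * ((n:ℝ)+j+1) = ((2*n).choose (n+j) : ℝ) * ((n:ℝ)-j) := by
      have := congrArg (Nat.cast : ℕ → ℝ) hrec
      push_cast [Nat.cast_sub hj] at this
      convert this using 2 <;> push_cast <;> ring
    have hden : (0:ℝ) < (n:ℝ)+j+1 := by positivity
    have hfac : ((n:ℝ)-j)/((n:ℝ)+j+1)
        ≤ Real.exp (-(2*(j:ℝ)+1)/(n:ℝ) + (3*(j:ℝ)^2+3*(j:ℝ)+1)/(n:ℝ)^2) := by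
      have h1 : ((n:ℝ)-j)/((n:ℝ)+j+1) = 1 - (2*(j:ℝ)+1)/((n:ℝ)+j+1) := by
        field_simp; ring
      have h2 : 1 - (2*(j:ℝ)+1)/((n:ℝ)+j+1) ≤ Real.exp (-((2*(j:ℝ)+1)/((n:ℝ)+j+1))) := by
        have := Real.add_one_le_exp (-((2*(j:ℝ)+1)/((n:ℝ)+j+1)))
        linarith
      have h3 : -((2*(j:ℝ)+1)/((n:ℝ)+j+1))
          ≤ -(2*(j:ℝ)+1)/(n:ℝ) + (3*(j:ℝ)^2+3*(j:ℝ)+1)/(n:ℝ)^2 := by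
        rw [neg_div, neg_le_iff_add_nonneg]
        have hjn : (0:ℝ) ≤ j := by positivity
        have expand : (2*(j:ℝ)+1)/((n:ℝ)+j+1) - (2*(j:ℝ)+1)/(n:ℝ) + (3*(j:ℝ)^2+3*(j:ℝ)+1)/(n:ℝ)^2
            = ((3*(j:ℝ)^2+3*(j:ℝ)+1)*((n:ℝ)+j+1) - (2*(j:ℝ)+1)*(j+1)*(n:ℝ)) / ((n:ℝ)^2*((n:ℝ)+j+1)) := by
          field_simp; ring
        have num_nonneg : (0:ℝ) ≤ (3*(j:ℝ)^2+3*(j:ℝ)+1)*((n:ℝ)+j+1) - (2*(j:ℝ)+1)*(j+1)*(n:ℝ) := by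
          nlinarith [sq_nonneg (j:ℝ), hnR.le, hjn]
        have : (0:ℝ) ≤ ((3*(j:ℝ)^2+3*(j:ℝ)+1)*((n:ℝ)+j+1) - (2*(j:ℝ)+1)*(j+1)*(n:ℝ)) / ((n:ℝ)^2*((n:ℝ)+j+1)) := by
          positivity
        linarith [expand ▸ this]
      exact h1 ▸ (h2.trans (Real.exp_le_exp.mpr h3))
    have hC0 : (0:ℝ) ≤ ((2*n).choose n : ℝ) := by positivity
    have hCj : ((2*n).choose (n+j+1) : ℝ) = ((2*n).choose (n+j) : ℝ) * (((n:ℝ)-j)/((n:ℝ)+j+1)) := by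
      field_simp
      linarith [hrecR]
    have hfacnn : (0:ℝ) ≤ ((n:ℝ)-j)/((n:ℝ)+j+1) := by
      apply div_nonneg _ hden.le
      have : (j:ℝ) ≤ n := by exact_mod_cast hj
      linarith
    calc ((2*n).choose (n+j+1) : ℝ)
        = ((2*n).choose (n+j) : ℝ) * (((n:ℝ)-j)/((n:ℝ)+j+1)) := hCj
      _ ≤ (((2*n).choose n : ℝ) * Real.exp (-(j:ℝ)^2/(n:ℝ) + (j:ℝ)^3/(n:ℝ)^2))
            * (((n:ℝ)-j)/((n:ℝ)+j+1)) := mul_le_mul_of_nonneg_right (ih hj) hfacnn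
      _ ≤ (((2*n).choose n : ℝ) * Real.exp (-(j:ℝ)^2/(n:ℝ) + (j:ℝ)^3/(n:ℝ)^2))
            * Real.exp (-(2*(j:ℝ)+1)/(n:ℝ) + (3*(j:ℝ)^2+3*(j:ℝ)+1)/(n:ℝ)^2) := by
          apply mul_le_mul_of_nonneg_left hfac
          positivity
      _ = ((2*n).choose n : ℝ) * Real.exp (-((j:ℕ)+1:ℝ)^2/(n:ℝ) + (((j:ℕ):ℝ)+1)^3/(n:ℝ)^2) := by
          rw [mul_assoc, ← Real.exp_add]
          congr 1
          field_simp
          ring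
      _ = ((2*n).choose n : ℝ) * Real.exp (-((j+1:ℕ):ℝ)^2/(n:ℝ) + ((j+1:ℕ):ℝ)^3/(n:ℝ)^2) := by
          push_cast; ring_nf

lemma term_bound (x : ℝ) (hx : 0 < x) (n : ℕ) (hn1 : 1 ≤ n) (hnx : x ^ 2 ≤ (n : ℝ))
    (k : ℕ) (hk : k ≤ 2*n) (hcond : |(k:ℝ) - n| < x * Real.sqrt ((n:ℝ)/2)) :
    ((2*n).choose k : ℝ)/4^n ≤ Real.exp (x^3/(2*Real.sqrt (2*(n:ℝ))))
      * (1/Real.sqrt (π*(n:ℝ))) * Real.exp (-((k:ℝ)-(n:ℝ))^2/(n:ℝ)) := by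
  have hnR : (0:ℝ) < n := by exact_mod_cast hn1
  -- find j
  obtain ⟨j, hjn, hchoose, hcast⟩ :
      ∃ j : ℕ, j ≤ n ∧ (2*n).choose k = (2*n).choose (n+j) ∧ |(k:ℝ) - n| = (j:ℝ) := by
    rcases le_or_gt n k with h | h
    · refine ⟨k - n, by omega, by rw [show n + (k-n) = k by omega], ?_⟩
      rw [abs_of_nonneg (by
        have : (n:ℝ) ≤ k := by exact_mod_cast h
        linarith)]
      push_cast [Nat.cast_sub h]; ring
    · refine ⟨n - k, by omega, ?_, ?_⟩
      · rw [show n + (n-k) = 2*n - k by omega, Nat.choose_symm hk]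
      · rw [abs_of_nonpos (by
          have : (k:ℝ) ≤ n := by exact_mod_cast h.le
          linarith)]
        push_cast [Nat.cast_sub h.le]; ring
  have hj_lt : (j:ℝ) < x * Real.sqrt ((n:ℝ)/2) := hcast ▸ hcond
  have hjnn : (0:ℝ) ≤ j := Nat.cast_nonneg j
  -- j^3/n^2 ≤ x^3/(2√(2n))
  have hcube : (j:ℝ)^3/(n:ℝ)^2 ≤ x^3/(2*Real.sqrt (2*(n:ℝ))) := by
    have hR3 : (j:ℝ)^3 ≤ (x * Real.sqrt ((n:ℝ)/2))^3 := by
      apply pow_le_pow_left₀ hjnn hj_lt.le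
    have hs : Real.sqrt ((n:ℝ)/2) ^ 3 = ((n:ℝ)/2) * Real.sqrt ((n:ℝ)/2) := by
      rw [pow_succ, Real.sq_sqrt (by positivity)]
    have hid : (x * Real.sqrt ((n:ℝ)/2))^3 / (n:ℝ)^2 = x^3/(2*Real.sqrt (2*(n:ℝ))) := by
      rw [mul_pow, hs]
      rw [div_eq_div_iff (by positivity) (by positivity)]
      have hmul : Real.sqrt ((n:ℝ)/2) * Real.sqrt (2*(n:ℝ)) = n := by
        rw [← Real.sqrt_mul (by positivity)]
        rw [show (n:ℝ)/2 * (2*(n:ℝ)) = (n:ℝ)^2 by ring]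
        exact Real.sqrt_sq hnR.le
      linear_combination (x^3*(n:ℝ)) * hmul
    calc (j:ℝ)^3/(n:ℝ)^2 ≤ (x * Real.sqrt ((n:ℝ)/2))^3 / (n:ℝ)^2 := by
          apply div_le_div_of_nonneg_right hR3 (by positivity) |>.trans_eq rfl
      _ = x^3/(2*Real.sqrt (2*(n:ℝ))) := hid
  have hsq_eq : ((k:ℝ)-(n:ℝ))^2 = (j:ℝ)^2 := by
    rw [← sq_abs, hcast]
  rw [hchoose, hsq_eq]
  calc ((2*n).choose (n+j) : ℝ)/4^n
      ≤ (((2*n).choose n : ℝ) * Real.exp (-(j:ℝ)^2/(n:ℝ) + (j:ℝ)^3/(n:ℝ)^2))/4^n := by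
        apply div_le_div_of_nonneg_right (choose_shift_le n hn1 j hjn) (by positivity) |>.trans_eq rfl
    _ = (((2*n).choose n : ℝ)/4^n) * (Real.exp (-(j:ℝ)^2/(n:ℝ)) * Real.exp ((j:ℝ)^3/(n:ℝ)^2)) := by
        rw [← Real.exp_add]; ring
    _ ≤ (1/Real.sqrt (π*(n:ℝ))) * (Real.exp (-(j:ℝ)^2/(n:ℝ)) * Real.exp (x^3/(2*Real.sqrt (2*(n:ℝ))))) := by
        apply mul_le_mul (central_le n hn1)
        · exact mul_le_mul_of_nonneg_left (Real.exp_le_exp.mpr hcube) (Real.exp_pos _).le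
        · positivity
        · positivity
    _ = Real.exp (x^3/(2*Real.sqrt (2*(n:ℝ)))) * (1/Real.sqrt (π*(n:ℝ))) * Real.exp (-(j:ℝ)^2/(n:ℝ)) := by
        ring

-- half-sum bound
lemma half_sum_le (x : ℝ) (hx : 0 < x) (n : ℕ) (hn1 : 1 ≤ n) :
    (∑ i ∈ Finset.range n, if ((i:ℝ)+1) < x * Real.sqrt ((n:ℝ)/2) then
        Real.exp (-((i:ℝ)+1)^2/(n:ℝ)) else 0)
      ≤ Real.sqrt ((n:ℝ)/2) * ∫ s in (0:ℝ)..x, Real.exp (-s^2/2) := by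
  have hnR : (0:ℝ) < n := by exact_mod_cast hn1
  set c : ℝ := Real.sqrt ((n:ℝ)/2) with hc
  have hcpos : 0 < c := Real.sqrt_pos.mpr (by positivity)
  set R : ℝ := x * c with hR
  have hRpos : 0 < R := by positivity
  set g : ℝ → ℝ := fun u => Real.exp (-u^2/(n:ℝ)) with hg
  have hgc : Continuous g := by fun_prop
  have hgint : ∀ a b : ℝ, IntervalIntegrable g MeasureTheory.volume a b :=
    fun a b => hgc.intervalIntegrable a b
  set M : ℕ := Nat.floor R with hM
  have hMR : (M:ℝ) ≤ R := Nat.floor_le hRpos.le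
  -- pointwise bound
  have hpt : ∀ i ∈ Finset.range n,
      (if ((i:ℝ)+1) < R then g ((i:ℝ)+1) else 0)
        ≤ (if i < M then (∫ u in (i:ℝ)..((i:ℝ)+1), g u) else 0) := by
    intro i _
    by_cases h : ((i:ℝ)+1) < R
    · rw [if_pos h, if_pos (by
        have : (i+1 : ℕ) ≤ M := Nat.le_floor (by push_cast; linarith)
        omega)]
      have hconst : g ((i:ℝ)+1) = ∫ _u in (i:ℝ)..((i:ℝ)+1), g ((i:ℝ)+1) := by
        rw [intervalIntegral.integral_const]; simp
      rw [hconst]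
      apply intervalIntegral.integral_mono_on (by linarith)
        (intervalIntegrable_const) (hgint _ _)
      intro u hu
      simp only [hg]
      apply Real.exp_le_exp.mpr
      have h0i : (0:ℝ) ≤ i := Nat.cast_nonneg i
      rcases hu with ⟨h1, h2⟩
      have hnum : -((i:ℝ)+1)^2 ≤ -u^2 := by nlinarith
      exact div_le_div_of_nonneg_right hnum hnR.le
    · rw [if_neg h]
      by_cases h2 : i < M
      · rw [if_pos h2]
        apply intervalIntegral.integral_nonneg (by linarith)
        intro u _; exact (Real.exp_pos _).le
      · rw [if_neg h2]
  have step1 := Finset.sum_le_sum hpt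
  -- sum of ifs ≤ sum over range M
  have step2 : (∑ i ∈ Finset.range n, if i < M then (∫ u in (i:ℝ)..((i:ℝ)+1), g u) else 0)
      ≤ ∑ i ∈ Finset.range M, ∫ u in (i:ℝ)..((i:ℝ)+1), g u := by
    rw [← Finset.sum_filter]
    apply Finset.sum_le_sum_of_subset_of_nonneg
    · intro i hi
      simp only [Finset.mem_filter, Finset.mem_range] at hi ⊢
      exact hi.2
    · intro i _ _
      apply intervalIntegral.integral_nonneg (by linarith)
      intro u _; exact (Real.exp_pos _).le
  -- adjacent intervals
  have step3 : (∑ i ∈ Finset.range M, ∫ u in (i:ℝ)..((i:ℝ)+1), g u)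
      = ∫ u in (0:ℝ)..(M:ℝ), g u := by
    have := intervalIntegral.sum_integral_adjacent_intervals
      (a := fun i : ℕ => (i:ℝ)) (n := M) (f := g) (μ := MeasureTheory.volume)
      (fun k _ => hgint _ _)
    simpa using this
  have step4 : (∫ u in (0:ℝ)..(M:ℝ), g u) ≤ ∫ u in (0:ℝ)..R, g u := by
    apply intervalIntegral.integral_mono_interval le_rfl (Nat.cast_nonneg M) hMR
      (Filter.Eventually.of_forall (fun u => (Real.exp_pos _).le)) (hgint _ _)
  -- substitution
  have step5 : (∫ u in (0:ℝ)..R, g u) = c * ∫ s in (0:ℝ)..x, Real.exp (-s^2/2) := by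
    have hsub := intervalIntegral.smul_integral_comp_mul_left (a := (0:ℝ)) (b := x) g c
    rw [mul_zero] at hsub
    rw [hR, mul_comm x c, ← hsub]
    rw [smul_eq_mul]
    congr 1
    apply intervalIntegral.integral_congr
    intro s _
    simp only [hg]
    congr 1
    have hc2 : c^2 = (n:ℝ)/2 := Real.sq_sqrt (by positivity)
    field_simp
    nlinarith [hc2]
  calc (∑ i ∈ Finset.range n, if ((i:ℝ)+1) < R then g ((i:ℝ)+1) else 0)
      ≤ _ := step1
    _ ≤ _ := step2
    _ = ∫ u in (0:ℝ)..(M:ℝ), g u := step3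
    _ ≤ ∫ u in (0:ℝ)..R, g u := step4
    _ = c * ∫ s in (0:ℝ)..x, Real.exp (-s^2/2) := step5

lemma gauss_sum_le (x : ℝ) (hx : 0 < x) (n : ℕ) (hn1 : 1 ≤ n) :
    (∑ k ∈ Finset.range (2*n+1), if |(k:ℝ)-(n:ℝ)| < x * Real.sqrt ((n:ℝ)/2) then
        Real.exp (-((k:ℝ)-(n:ℝ))^2/(n:ℝ)) else 0)
      ≤ 1 + 2 * (Real.sqrt ((n:ℝ)/2) * ∫ s in (0:ℝ)..x, Real.exp (-s^2/2)) := by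
  set R : ℝ := x * Real.sqrt ((n:ℝ)/2) with hR
  set w : ℕ → ℝ := fun k => if |(k:ℝ)-(n:ℝ)| < R then Real.exp (-((k:ℝ)-(n:ℝ))^2/(n:ℝ)) else 0
    with hw
  set v : ℕ → ℝ := fun i => if ((i:ℝ)+1) < R then Real.exp (-((i:ℝ)+1)^2/(n:ℝ)) else 0 with hv
  have hveq : ∀ k i : ℕ, |(k:ℝ)-(n:ℝ)| = (i:ℝ)+1 → w k = v i := by
    intro k i h
    simp only [hw, hv, h]
    rcases lt_or_ge ((i:ℝ)+1) R with h2 | h2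
    · rw [if_pos h2, if_pos h2, ← sq_abs ((k:ℝ)-(n:ℝ)), h]
    · rw [if_neg (not_lt.mpr h2), if_neg (not_lt.mpr h2)]
  have hsplit : (∑ k ∈ Finset.range (2*n+1), w k)
      = (∑ k ∈ Finset.range n, w k) + ∑ k ∈ Finset.Ico n (2*n+1), w k :=
    (Finset.sum_range_add_sum_Ico w (by omega)).symm
  have hlow : (∑ k ∈ Finset.range n, w k) = ∑ i ∈ Finset.range n, v i := by
    rw [← Finset.sum_range_reflect w n]
    apply Finset.sum_congr rfl
    intro i hi
    have hin : i < n := Finset.mem_range.mp hi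
    apply hveq
    have hcast : ((n - 1 - i : ℕ):ℝ) = (n:ℝ) - 1 - i := by
      push_cast [Nat.cast_sub (by omega : 1 + i ≤ n), Nat.sub_sub]
      ring
    rw [hcast, show (n:ℝ) - 1 - i - n = -((i:ℝ)+1) by ring, abs_neg,
      abs_of_nonneg (by positivity)]
  have hup : (∑ k ∈ Finset.Ico n (2*n+1), w k) = (∑ i ∈ Finset.range n, v i) + w n := by
    rw [Finset.sum_Ico_eq_sum_range, show 2*n+1-n = n+1 by omega, Finset.sum_range_succ']
    congr 1
    · apply Finset.sum_congr rfl
      intro i _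
      apply hveq
      push_cast
      rw [show (n:ℝ) + ((i:ℝ)+1) - n = (i:ℝ)+1 by ring, abs_of_nonneg (by positivity)]
  have hwn : w n ≤ 1 := by
    simp only [hw, sub_self]
    split
    · simp
    · norm_num
  have hhalf := half_sum_le x hx n hn1
  rw [hsplit, hlow, hup]
  have : (∑ i ∈ Finset.range n, v i) ≤ Real.sqrt ((n:ℝ)/2) * ∫ s in (0:ℝ)..x, Real.exp (-s^2/2) := hhalf
  linarith

set_option maxHeartbeats 1000000 in
theorem stmt_16 (x : ℝ) (hx : 0 < x) (n : ℕ) (hn1 : 1 ≤ n) (hnx : x ^ 2 ≤ (n : ℝ)) :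
    (∑ k ∈ Finset.range (2 * n + 1),
        if |(k : ℝ) - n| < x * Real.sqrt ((n : ℝ) / 2) then
          ((2 * n).choose k : ℝ) / 4 ^ n else 0) ≤
      (∫ s in (-x)..x, Real.exp (-s ^ 2 / 2)) / Real.sqrt (2 * Real.pi) +
        Real.exp ((x ^ 3 + 2) / (2 * Real.sqrt (2 * n))) - 1 := by
  have hnR : (0:ℝ) < n := by exact_mod_cast hn1
  set f : ℝ → ℝ := fun s => Real.exp (-s^2/2) with hf
  have hfc : Continuous f := by fun_prop
  have hfint : ∀ a b : ℝ, IntervalIntegrable f MeasureTheory.volume a b :=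
    fun a b => hfc.intervalIntegrable a b
  set D : ℝ := ∫ s in (0:ℝ)..x, f s with hD
  have hDnn : 0 ≤ D := intervalIntegral.integral_nonneg hx.le (fun s _ => (Real.exp_pos _).le)
  -- symmetry: I = 2D
  have hI2D : (∫ s in (-x)..x, f s) = 2 * D := by
    have h1 : (∫ s in (-x)..(0:ℝ), f s) + ∫ s in (0:ℝ)..x, f s = ∫ s in (-x)..x, f s :=
      intervalIntegral.integral_add_adjacent_intervals (hfint _ _) (hfint _ _)
    have h2 : (∫ s in (-x)..(0:ℝ), f s) = D := by
      have h3 : (∫ s in (0:ℝ)..x, f (-s)) = ∫ s in (-x)..(-(0:ℝ)), f s :=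
        intervalIntegral.integral_comp_neg f
      rw [neg_zero] at h3
      rw [← h3, hD]
      apply intervalIntegral.integral_congr
      intro s _
      simp [hf, neg_sq]
    linarith [h1, h2]
  -- I ≤ √(2π)
  have hglobal : MeasureTheory.Integrable f := by
    have h := integrable_exp_neg_mul_sq (show (0:ℝ) < 1/2 by norm_num)
    have heq : f = (fun s:ℝ => Real.exp (-(1/2)*s^2)) := by
      funext s; rw [hf]; ring_nf
    rw [heq]; exact h
  have hval : (∫ s : ℝ, f s) = Real.sqrt (2*π) := by
    have h := integral_gaussian (1/2)
    have heq : f = (fun s:ℝ => Real.exp (-(1/2)*s^2)) := by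
      funext s; rw [hf]; ring_nf
    rw [heq]
    rw [h, show π/(1/2 : ℝ) = 2*π by ring]
  have hIle : (∫ s in (-x)..x, f s) ≤ Real.sqrt (2*π) := by
    rw [intervalIntegral.integral_of_le (by linarith : -x ≤ x), ← hval]
    exact MeasureTheory.setIntegral_le_integral hglobal
      (Filter.Eventually.of_forall (fun s => (Real.exp_pos _).le))
  have hsqrt2pi : (0:ℝ) < Real.sqrt (2*π) := Real.sqrt_pos.mpr (by positivity)
  set A : ℝ := (∫ s in (-x)..x, f s) / Real.sqrt (2*π) with hA
  have hA1 : A ≤ 1 := by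
    rw [hA, div_le_one hsqrt2pi]; exact hIle
  have hA0 : 0 ≤ A := by
    rw [hA, hI2D]; positivity
  -- step A: bound LHS by E * gauss sum
  set t₁ : ℝ := x^3/(2*Real.sqrt (2*(n:ℝ))) with ht₁
  set E : ℝ := Real.exp t₁ * (1/Real.sqrt (π*(n:ℝ))) with hE
  have hEnn : 0 ≤ E := by positivity
  have stepA : (∑ k ∈ Finset.range (2 * n + 1),
        if |(k : ℝ) - n| < x * Real.sqrt ((n : ℝ) / 2) then
          ((2 * n).choose k : ℝ) / 4 ^ n else 0)
      ≤ E * ∑ k ∈ Finset.range (2*n+1), (if |(k:ℝ)-(n:ℝ)| < x * Real.sqrt ((n:ℝ)/2) then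
          Real.exp (-((k:ℝ)-(n:ℝ))^2/(n:ℝ)) else 0) := by
    rw [Finset.mul_sum]
    apply Finset.sum_le_sum
    intro k hk
    have hk2 : k ≤ 2*n := by
      have := Finset.mem_range.mp hk; omega
    by_cases hcond : |(k:ℝ)-(n:ℝ)| < x * Real.sqrt ((n:ℝ)/2)
    · rw [if_pos hcond, if_pos hcond, hE, mul_assoc]
      exact (term_bound x hx n hn1 hnx k hk2 hcond).trans_eq (by ring)
    · rw [if_neg hcond, if_neg hcond, mul_zero]
  have stepB : E * (∑ k ∈ Finset.range (2*n+1), (if |(k:ℝ)-(n:ℝ)| < x * Real.sqrt ((n:ℝ)/2) then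
          Real.exp (-((k:ℝ)-(n:ℝ))^2/(n:ℝ)) else 0))
      ≤ E * (1 + 2 * (Real.sqrt ((n:ℝ)/2) * D)) :=
    mul_le_mul_of_nonneg_left (gauss_sum_le x hx n hn1) hEnn
  -- identity : √(n/2)/√(πn) = 1/√(2π)
  have hid : Real.sqrt ((n:ℝ)/2) * (1/Real.sqrt (π*(n:ℝ))) = 1/Real.sqrt (2*π) := by
    have h1 : Real.sqrt (π*(n:ℝ)) = Real.sqrt ((n:ℝ)/2) * Real.sqrt (2*π) := by
      rw [← Real.sqrt_mul (by positivity)]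
      congr 1; ring
    rw [h1]
    have h2 : (0:ℝ) < Real.sqrt ((n:ℝ)/2) := Real.sqrt_pos.mpr (by positivity)
    field_simp
  have hEexpand : E * (1 + 2 * (Real.sqrt ((n:ℝ)/2) * D))
      = Real.exp t₁ * (1/Real.sqrt (π*(n:ℝ)) + A) := by
    rw [hE, hA, hI2D]
    have : (2 * D) / Real.sqrt (2*π) = 2 * D * (1/Real.sqrt (2*π)) := by ring
    rw [this, ← hid]
    ring
  -- final arithmetic
  set t₂ : ℝ := 1/Real.sqrt (2*(n:ℝ)) with ht₂
  have hsqrt2n : (0:ℝ) < Real.sqrt (2*(n:ℝ)) := Real.sqrt_pos.mpr (by positivity)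
  have hbt : 1/Real.sqrt (π*(n:ℝ)) ≤ t₂ := by
    rw [ht₂]
    apply one_div_le_one_div_of_le hsqrt2n
    apply Real.sqrt_le_sqrt
    nlinarith [Real.pi_gt_three]
  have hbnn : (0:ℝ) ≤ 1/Real.sqrt (π*(n:ℝ)) := by positivity
  have ht₁nn : 0 ≤ t₁ := by rw [ht₁]; positivity
  have hu1 : 1 ≤ Real.exp t₁ := Real.one_le_exp ht₁nn
  have hT : Real.exp t₁ * Real.exp t₂ = Real.exp ((x^3+2)/(2*Real.sqrt (2*(n:ℝ)))) := by
    rw [← Real.exp_add]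
    congr 1
    rw [ht₁, ht₂]
    field_simp
  have het : 1 + t₂ ≤ Real.exp t₂ := by
    have := Real.add_one_le_exp t₂
    linarith
  have hupos : (0:ℝ) < Real.exp t₁ := Real.exp_pos _
  have p1 : Real.exp t₁ * (1/Real.sqrt (π*(n:ℝ))) ≤ Real.exp t₁ * t₂ :=
    mul_le_mul_of_nonneg_left hbt hupos.le
  have p2 : Real.exp t₁ * (1+t₂) ≤ Real.exp t₁ * Real.exp t₂ :=
    mul_le_mul_of_nonneg_left het hupos.le
  have p3 : Real.exp t₁ * A ≤ Real.exp t₁ - 1 + A := by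
    nlinarith [mul_nonneg (sub_nonneg.mpr hu1) (sub_nonneg.mpr hA1)]
  have goal2 : Real.exp t₁ * (1/Real.sqrt (π*(n:ℝ)) + A)
      ≤ A + Real.exp ((x^3+2)/(2*Real.sqrt (2*(n:ℝ)))) - 1 := by
    rw [← hT]
    nlinarith [p1, p2, p3]
  calc (∑ k ∈ Finset.range (2 * n + 1),
        if |(k : ℝ) - n| < x * Real.sqrt ((n : ℝ) / 2) then
          ((2 * n).choose k : ℝ) / 4 ^ n else 0)
      ≤ _ := stepA
    _ ≤ E * (1 + 2 * (Real.sqrt ((n:ℝ)/2) * D)) := stepB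
    _ = Real.exp t₁ * (1/Real.sqrt (π*(n:ℝ)) + A) := hEexpand
    _ ≤ A + Real.exp ((x^3+2)/(2*Real.sqrt (2*(n:ℝ)))) - 1 := goal2
end
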